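/- Let r ∈ (0,1) be such that (1−r)/r is not integral over ℤ (i.e., is not an algebraic integer). Then there is no partition polynomial P with P(r) = 1/2. -/

import Mathlib

open MeasureTheory Polynomial

/-- `P` is a partition polynomial: `P(X) = ∑_{i=0}^n a_i X^i (1-X)^(n-i)` with
integers `0 ≤ a_i ≤ C(n,i)`. -/
def IsPartitionPolynomial (P : Polynomial ℤ) : Prop :=
  ∃ (n : ℕ) (a : ℕ → ℤ),
    (∀ i ≤ n, 0 ≤ a i ∧ a i ≤ (n.choose i : ℤ)) ∧
    P = ∑ i ∈ Finset.range (n + 1), C (a i) * X ^ i * (1 - X) ^ (n - i)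

/-- if `r ∈ (0,1)` and `(1-r)/r` is not an algebraic integer,
then no partition polynomial takes the value `1/2` at `r`. -/
theorem no_partition_polynomial_half (r : ℝ) (hr : r ∈ Set.Ioo (0 : ℝ) 1)
    (hβ : ¬ IsIntegral ℤ ((1 - r) / r)) :
    ¬ ∃ P : Polynomial ℤ, IsPartitionPolynomial P ∧ aeval r P = (1 / 2 : ℝ) := by
  rintro ⟨P, ⟨n, a, ha, rfl⟩, hval⟩
  obtain ⟨hr0, hr1⟩ := hr
  have hrne : r ≠ 0 := ne_of_gt hr0
  have hrn : (r : ℝ) ^ n ≠ 0 := pow_ne_zero _ hrne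
  set β : ℝ := (1 - r) / r with hβdef
  have h1β : 1 + β = 1 / r := by
    rw [hβdef]
    field_simp
    ring
  -- evaluate the hypothesis
  have h1 : ∑ i ∈ Finset.range (n + 1), (a i : ℝ) * r ^ i * (1 - r) ^ (n - i)
      = 1 / 2 := by
    simpa [map_sum] using hval
  have hterm : ∀ i ∈ Finset.range (n + 1),
      (a i : ℝ) * r ^ i * (1 - r) ^ (n - i) = r ^ n * ((a i : ℝ) * β ^ (n - i)) := by
    intro i hi
    have hin : i ≤ n := Nat.lt_succ_iff.mp (Finset.mem_range.mp hi)
    have hsplit : r ^ n = r ^ i * r ^ (n - i) := by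
      rw [← pow_add]; congr 1; omega
    rw [hsplit, hβdef, div_pow]
    field_simp
  have h2 : r ^ n * ∑ i ∈ Finset.range (n + 1), (a i : ℝ) * β ^ (n - i) = 1 / 2 := by
    rw [Finset.mul_sum, ← Finset.sum_congr rfl hterm, h1]
  have h2' : ∑ i ∈ Finset.range (n + 1), (a i : ℝ) * β ^ (n - i) = 1 / (2 * r ^ n) := by
    field_simp at h2 ⊢
    linarith [h2]
  have hsum : ∑ j ∈ Finset.range (n + 1), (a (n - j) : ℝ) * β ^ j
      = ∑ i ∈ Finset.range (n + 1), (a i : ℝ) * β ^ (n - i) := by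
    rw [← Finset.sum_range_reflect]
    refine Finset.sum_congr rfl fun i hi => ?_
    have hin : i ≤ n := Nat.lt_succ_iff.mp (Finset.mem_range.mp hi)
    rw [show n + 1 - 1 - i = n - i from rfl, show n - (n - i) = i by omega]
  have hchoose : ∑ j ∈ Finset.range (n + 1), (n.choose j : ℝ) * β ^ j = (1 / r) ^ n := by
    have hb : ((1 : ℝ) / r) ^ n = (β + 1) ^ n := by rw [← h1β, add_comm]
    rw [hb, add_pow]
    exact Finset.sum_congr rfl fun j hj => by ring
  -- the sign
  set s : ℤ := 1 - 2 * a 0 with hs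
  have ha0 : a 0 = 0 ∨ a 0 = 1 := by
    have := ha 0 (Nat.zero_le n); simp at this; omega
  have hss : s * s = 1 := by rcases ha0 with h | h <;> simp [hs, h]
  -- the monic polynomial
  set q : Polynomial ℤ :=
    ∑ j ∈ Finset.range (n + 1), C (s * ((n.choose j : ℤ) - 2 * a (n - j))) * X ^ j with hq
  have hdeg : q.natDegree ≤ n := by
    refine le_trans (Polynomial.natDegree_sum_le _ _) ?_
    simp only [Finset.fold_max_le]
    exact ⟨Nat.zero_le n, fun j hj =>
      le_trans (natDegree_C_mul_X_pow_le _ _) (Nat.lt_succ_iff.mp (Finset.mem_range.mp hj))⟩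
  have hcoeff : q.coeff n = 1 := by
    rw [hq, Polynomial.finset_sum_coeff]
    simp only [Polynomial.coeff_C_mul, Polynomial.coeff_X_pow]
    rw [Finset.sum_eq_single n (fun j _ hjn => by simp [Ne.symm hjn])
      (fun h => absurd (Finset.self_mem_range_succ n) h)]
    simp only [if_pos rfl, mul_one, Nat.sub_self, Nat.choose_self]
    push_cast
    rw [← hs, hss]
    norm_num
  have hmonic : q.Monic := Polynomial.monic_of_natDegree_le_of_coeff_eq_one n hdeg hcoeff
  have heval : aeval β q = 0 := by
    rw [hq, map_sum]
    have hterm2 : ∀ j ∈ Finset.range (n + 1),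
        aeval β (C (s * ((n.choose j : ℤ) - 2 * a (n - j))) * X ^ j)
        = (s : ℝ) * ((n.choose j : ℝ) * β ^ j) - (s : ℝ) * (2 * ((a (n - j) : ℝ) * β ^ j)) := by
      intro j hj
      rw [map_mul, map_pow, aeval_C, aeval_X, algebraMap_int_eq, eq_intCast]
      push_cast
      ring
    rw [Finset.sum_congr rfl hterm2, Finset.sum_sub_distrib, ← Finset.mul_sum,
      ← Finset.mul_sum, hchoose]
    have hmul2 : ∑ j ∈ Finset.range (n + 1), 2 * ((a (n - j) : ℝ) * β ^ j)
        = 2 * ∑ j ∈ Finset.range (n + 1), (a (n - j) : ℝ) * β ^ j := by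
      rw [Finset.mul_sum]
    rw [hmul2, hsum, h2']
    rw [div_pow, one_pow]
    field_simp
    ring
  exact hβ ⟨q, hmonic, heval⟩
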